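/- Suppose 𝒜 : ℝ^{m×n} → ℝ^p satisfies the RIP with constant δ_r(𝒜). Let Ψ, Ψ' be orthonormal subsets of ℝ^{m×n} such that rank(P_{Ψ∪Ψ'} X) ≤ r for every X ∈ ℝ^{m×n}. Then for all X ∈ span(Ψ'): ‖P_Ψ 𝒜* 𝒜 (I − P_Ψ) X‖_F ≤ δ_r(𝒜) ‖(I − P_Ψ) X‖_F. -/

import Mathlib

open scoped BigOperators
open Matrix

noncomputable section

/-- Frobenius (trace) inner product of real matrices. -/
def frobInner {m n : ℕ} (X Y : Matrix (Fin m) (Fin n) ℝ) : ℝ :=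
  ∑ i, ∑ j, X i j * Y i j

/-- Frobenius norm of a real matrix. -/
def frobNorm {m n : ℕ} (X : Matrix (Fin m) (Fin n) ℝ) : ℝ :=
  Real.sqrt (frobInner X X)

/-- Euclidean norm of a vector in ℝ^p. -/
def vecNorm {p : ℕ} (b : Fin p → ℝ) : ℝ :=
  Real.sqrt (∑ i, b i ^ 2)

/-- A finite set of matrices is orthonormal w.r.t. the trace inner product. -/
def IsOrthonormalSet {m n : ℕ} (Ψ : Finset (Matrix (Fin m) (Fin n) ℝ)) : Prop :=
  (∀ ψ ∈ Ψ, frobInner ψ ψ = 1) ∧ ∀ ψ ∈ Ψ, ∀ φ ∈ Ψ, ψ ≠ φ → frobInner ψ φ = 0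

/-- Orthogonal projection onto the span of an orthonormal family Ψ. -/
def projSpan {m n : ℕ} (Ψ : Finset (Matrix (Fin m) (Fin n) ℝ))
    (X : Matrix (Fin m) (Fin n) ℝ) : Matrix (Fin m) (Fin n) ℝ :=
  ∑ ψ ∈ Ψ, frobInner ψ X • ψ

section Aux

variable {m n : ℕ}

lemma frobInner_comm (X Y : Matrix (Fin m) (Fin n) ℝ) : frobInner X Y = frobInner Y X := by
  unfold frobInner
  exact Finset.sum_congr rfl fun i _ => Finset.sum_congr rfl fun j _ => mul_comm _ _

lemma frobInner_self_nonneg (X : Matrix (Fin m) (Fin n) ℝ) : 0 ≤ frobInner X X :=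
  Finset.sum_nonneg fun i _ => Finset.sum_nonneg fun j _ => mul_self_nonneg _

lemma frobNorm_nonneg (X : Matrix (Fin m) (Fin n) ℝ) : 0 ≤ frobNorm X :=
  Real.sqrt_nonneg _

lemma frobNorm_sq (X : Matrix (Fin m) (Fin n) ℝ) : frobNorm X ^ 2 = frobInner X X :=
  Real.sq_sqrt (frobInner_self_nonneg X)

lemma frobInner_self_eq_zero {X : Matrix (Fin m) (Fin n) ℝ} (h : frobInner X X = 0) :
    X = 0 := by
  ext i j
  have h1 : ∀ i ∈ (Finset.univ : Finset (Fin m)), (0:ℝ) ≤ ∑ j, X i j * X i j :=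
    fun i _ => Finset.sum_nonneg fun j _ => mul_self_nonneg _
  have h2 := (Finset.sum_eq_zero_iff_of_nonneg h1).mp h i (Finset.mem_univ i)
  have h3 : ∀ j ∈ (Finset.univ : Finset (Fin n)), (0:ℝ) ≤ X i j * X i j :=
    fun j _ => mul_self_nonneg _
  have h4 := (Finset.sum_eq_zero_iff_of_nonneg h3).mp h2 j (Finset.mem_univ j)
  simpa [mul_self_eq_zero] using h4

lemma frobInner_add_left (X Y Z : Matrix (Fin m) (Fin n) ℝ) :
    frobInner (X + Y) Z = frobInner X Z + frobInner Y Z := by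
  simp [frobInner, Matrix.add_apply, add_mul, Finset.sum_add_distrib]

lemma frobInner_sub_left (X Y Z : Matrix (Fin m) (Fin n) ℝ) :
    frobInner (X - Y) Z = frobInner X Z - frobInner Y Z := by
  simp [frobInner, Matrix.sub_apply, sub_mul, Finset.sum_sub_distrib]

lemma frobInner_smul_left (c : ℝ) (X Y : Matrix (Fin m) (Fin n) ℝ) :
    frobInner (c • X) Y = c * frobInner X Y := by
  simp [frobInner, Matrix.smul_apply, smul_eq_mul, mul_assoc, Finset.mul_sum]

lemma frobInner_add_right (X Y Z : Matrix (Fin m) (Fin n) ℝ) :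
    frobInner X (Y + Z) = frobInner X Y + frobInner X Z := by
  rw [frobInner_comm, frobInner_add_left, frobInner_comm Y X, frobInner_comm Z X]

lemma frobInner_sub_right (X Y Z : Matrix (Fin m) (Fin n) ℝ) :
    frobInner X (Y - Z) = frobInner X Y - frobInner X Z := by
  rw [frobInner_comm, frobInner_sub_left, frobInner_comm Y X, frobInner_comm Z X]

lemma frobInner_smul_right (c : ℝ) (X Y : Matrix (Fin m) (Fin n) ℝ) :
    frobInner X (c • Y) = c * frobInner X Y := by
  rw [frobInner_comm, frobInner_smul_left, frobInner_comm Y X]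

lemma frobInner_sum_left {ι : Type*} (s : Finset ι) (f : ι → Matrix (Fin m) (Fin n) ℝ)
    (Y : Matrix (Fin m) (Fin n) ℝ) :
    frobInner (∑ x ∈ s, f x) Y = ∑ x ∈ s, frobInner (f x) Y := by
  classical
  induction s using Finset.induction with
  | empty => simp [frobInner]
  | insert _ _ h ih => rw [Finset.sum_insert h, frobInner_add_left, ih, Finset.sum_insert h]

lemma proj_inner_left (Ψ : Finset (Matrix (Fin m) (Fin n) ℝ))
    (W V : Matrix (Fin m) (Fin n) ℝ) :
    frobInner (projSpan Ψ W) V = ∑ ψ ∈ Ψ, frobInner ψ W * frobInner ψ V := by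
  unfold projSpan
  rw [frobInner_sum_left]
  exact Finset.sum_congr rfl fun ψ _ => frobInner_smul_left _ _ _

lemma proj_coeff {Ψ : Finset (Matrix (Fin m) (Fin n) ℝ)} (hΨ : IsOrthonormalSet Ψ)
    {ψ : Matrix (Fin m) (Fin n) ℝ} (hψ : ψ ∈ Ψ) (W : Matrix (Fin m) (Fin n) ℝ) :
    frobInner ψ (projSpan Ψ W) = frobInner ψ W := by
  rw [frobInner_comm, proj_inner_left]
  rw [Finset.sum_eq_single ψ]
  · rw [hΨ.1 ψ hψ, mul_one, frobInner_comm]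
  · intro φ hφ hne
    rw [frobInner_comm φ ψ, hΨ.2 ψ hψ φ hφ hne.symm, mul_zero]
  · intro h; exact absurd hψ h

lemma inner_W_proj {Ψ : Finset (Matrix (Fin m) (Fin n) ℝ)} (hΨ : IsOrthonormalSet Ψ)
    (W : Matrix (Fin m) (Fin n) ℝ) :
    frobInner (projSpan Ψ W) (projSpan Ψ W) = frobInner W (projSpan Ψ W) := by
  rw [frobInner_comm W (projSpan Ψ W), proj_inner_left, proj_inner_left]
  exact Finset.sum_congr rfl fun ψ hψ => by rw [proj_coeff hΨ hψ]

lemma ortho_residual {Ψ : Finset (Matrix (Fin m) (Fin n) ℝ)} (hΨ : IsOrthonormalSet Ψ)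
    (X : Matrix (Fin m) (Fin n) ℝ) {ψ : Matrix (Fin m) (Fin n) ℝ} (hψ : ψ ∈ Ψ) :
    frobInner ψ (X - projSpan Ψ X) = 0 := by
  rw [frobInner_sub_right, proj_coeff hΨ hψ, sub_self]

def vInner {p : ℕ} (b c : Fin p → ℝ) : ℝ := ∑ i, b i * c i

lemma vecNorm_sq {p : ℕ} (b : Fin p → ℝ) : vecNorm b ^ 2 = vInner b b := by
  rw [vecNorm, Real.sq_sqrt (Finset.sum_nonneg fun i _ => sq_nonneg _)]
  exact Finset.sum_congr rfl fun i _ => by rw [sq]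

lemma vInner_parallelogram {p : ℕ} (b c : Fin p → ℝ) :
    vInner (b + c) (b + c) - vInner (b - c) (b - c) = 4 * vInner b c := by
  simp only [vInner, Pi.add_apply, Pi.sub_apply, ← Finset.sum_sub_distrib, Finset.mul_sum]
  exact Finset.sum_congr rfl fun i _ => by ring

lemma vInner_smul_left {p : ℕ} (a : ℝ) (b c : Fin p → ℝ) :
    vInner (a • b) c = a * vInner b c := by
  simp [vInner, Finset.mul_sum, mul_assoc]

lemma vInner_smul_right {p : ℕ} (a : ℝ) (b c : Fin p → ℝ) :
    vInner b (a • c) = a * vInner b c := by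
  simp [vInner, Finset.mul_sum]; exact Finset.sum_congr rfl fun i _ => by ring

lemma projSpan_mem_span {Ψ : Finset (Matrix (Fin m) (Fin n) ℝ)}
    (S : Set (Matrix (Fin m) (Fin n) ℝ)) (hS : (Ψ : Set (Matrix (Fin m) (Fin n) ℝ)) ⊆ S)
    (W : Matrix (Fin m) (Fin n) ℝ) : projSpan Ψ W ∈ Submodule.span ℝ S :=
  Submodule.sum_mem _ fun ψ hψ =>
    Submodule.smul_mem _ _ (Submodule.subset_span (hS (Finset.mem_coe.mpr hψ)))

end Aux

set_option maxHeartbeats 1000000 in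
/-- Proposition 2.2: ‖P_Ψ 𝒜* 𝒜 (I − P_Ψ) X‖_F ≤ δ_r ‖(I − P_Ψ) X‖_F for X ∈ span Ψ'. -/
theorem proj_cross_bound {m n p r : ℕ}
    (A : Matrix (Fin m) (Fin n) ℝ →ₗ[ℝ] (Fin p → ℝ))
    (Aadj : (Fin p → ℝ) →ₗ[ℝ] Matrix (Fin m) (Fin n) ℝ)
    (hadj : ∀ (X : Matrix (Fin m) (Fin n) ℝ) (c : Fin p → ℝ),
      ∑ i, A X i * c i = frobInner (Aadj c) X)
    (δ : ℝ) (hδ : 0 ≤ δ)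
    (hRIP : ∀ X : Matrix (Fin m) (Fin n) ℝ, X.rank ≤ r →
      (1 - δ) * frobNorm X ^ 2 ≤ vecNorm (A X) ^ 2 ∧
        vecNorm (A X) ^ 2 ≤ (1 + δ) * frobNorm X ^ 2)
    (Ψ Ψ' : Finset (Matrix (Fin m) (Fin n) ℝ))
    (hΨ : IsOrthonormalSet Ψ) (hΨ' : IsOrthonormalSet Ψ')
    (hrank : ∀ Z ∈ Submodule.span ℝ ((Ψ : Set (Matrix (Fin m) (Fin n) ℝ)) ∪ ↑Ψ'),
      Z.rank ≤ r) :
    ∀ X ∈ Submodule.span ℝ ((Ψ' : Set (Matrix (Fin m) (Fin n) ℝ))),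
      frobNorm (projSpan Ψ (Aadj (A (X - projSpan Ψ X)))) ≤
        δ * frobNorm (X - projSpan Ψ X) := by
  intro X hX
  set Y := X - projSpan Ψ X with hYdef
  set W := Aadj (A Y) with hWdef
  set Z := projSpan Ψ W with hZdef
  set nY := frobNorm Y with hnYdef
  set nZ := frobNorm Z with hnZdef
  have hnY0 : 0 ≤ nY := frobNorm_nonneg Y
  have hnZ0 : 0 ≤ nZ := frobNorm_nonneg Z
  -- key identity : ⟨A Y, A Z⟩ = ‖Z‖²
  have hAYZ : vInner (A Y) (A Z) = nZ ^ 2 := by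
    have h1 := hadj Z (A Y)
    have h2 : vInner (A Y) (A Z) = frobInner W Z := by
      rw [← hWdef] at h1
      rw [← h1]
      exact Finset.sum_congr rfl fun i _ => mul_comm _ _
    rw [h2, hZdef, ← inner_W_proj hΨ W, ← hZdef, ← frobNorm_sq, ← hnZdef]
  by_cases hZ0 : nZ = 0
  · rw [hZ0]; exact mul_nonneg hδ hnY0
  have hnZpos : 0 < nZ := lt_of_le_of_ne hnZ0 (Ne.symm hZ0)
  have hYne : Y ≠ 0 := by
    intro hy
    have : A Y = 0 := by rw [hy, map_zero]
    have h0 : vInner (A Y) (A Z) = 0 := by simp [vInner, this]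
    rw [hAYZ] at h0
    exact hZ0 ((pow_eq_zero_iff two_ne_zero).mp h0)
  have hnYpos : 0 < nY := by
    rcases lt_or_eq_of_le hnY0 with h | h
    · exact h
    · exfalso
      apply hYne
      apply frobInner_self_eq_zero
      rw [← frobNorm_sq, ← hnYdef, ← h]; ring
  -- memberships
  have hΨsub : (Ψ : Set (Matrix (Fin m) (Fin n) ℝ)) ⊆ (↑Ψ ∪ ↑Ψ') := Set.subset_union_left
  have hXmem : X ∈ Submodule.span ℝ ((Ψ : Set (Matrix (Fin m) (Fin n) ℝ)) ∪ ↑Ψ') :=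
    Submodule.span_mono Set.subset_union_right hX
  have hYmem : Y ∈ Submodule.span ℝ ((Ψ : Set (Matrix (Fin m) (Fin n) ℝ)) ∪ ↑Ψ') :=
    sub_mem hXmem (projSpan_mem_span _ hΨsub X)
  have hZmem : Z ∈ Submodule.span ℝ ((Ψ : Set (Matrix (Fin m) (Fin n) ℝ)) ∪ ↑Ψ') :=
    projSpan_mem_span _ hΨsub W
  set U := nZ • Y with hUdef
  set V := nY • Z with hVdef
  have hUmem := Submodule.smul_mem _ nZ hYmem
  have hVmem := Submodule.smul_mem _ nY hZmem
  have h1 := (hRIP (U + V) (hrank _ (add_mem hUmem hVmem))).2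
  have h2 := (hRIP (U - V) (hrank _ (sub_mem hUmem hVmem))).1
  -- orthogonality
  have horthoZY : frobInner Z Y = 0 := by
    rw [hZdef, proj_inner_left]
    apply Finset.sum_eq_zero
    intro ψ hψ
    rw [hYdef, ortho_residual hΨ X hψ, mul_zero]
  have horthoYZ : frobInner Y Z = 0 := by rw [frobInner_comm]; exact horthoZY
  have haY : frobInner Y Y = nY ^ 2 := (frobNorm_sq Y).symm
  have haZ : frobInner Z Z = nZ ^ 2 := (frobNorm_sq Z).symm
  -- norms of U ± V
  have hW1 : frobNorm (U + V) ^ 2 = 2 * (nY ^ 2 * nZ ^ 2) := by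
    rw [frobNorm_sq, hUdef, hVdef]
    simp only [frobInner_add_left, frobInner_add_right, frobInner_smul_left,
      frobInner_smul_right, haY, haZ, horthoYZ, horthoZY]
    ring
  have hW2 : frobNorm (U - V) ^ 2 = 2 * (nY ^ 2 * nZ ^ 2) := by
    rw [frobNorm_sq, hUdef, hVdef]
    simp only [frobInner_sub_left, frobInner_sub_right, frobInner_smul_left,
      frobInner_smul_right, haY, haZ, horthoYZ, horthoZY]
    ring
  have hv1 : vecNorm (A (U + V)) ^ 2 = vInner (A U + A V) (A U + A V) := by
    rw [map_add, vecNorm_sq]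
  have hv2 : vecNorm (A (U - V)) ^ 2 = vInner (A U - A V) (A U - A V) := by
    rw [map_sub, vecNorm_sq]
  have hpar := vInner_parallelogram (A U) (A V)
  have hUV : vInner (A U) (A V) = nZ * nY * nZ ^ 2 := by
    rw [hUdef, hVdef, LinearMap.map_smul, LinearMap.map_smul, vInner_smul_left, vInner_smul_right, hAYZ]
    ring
  rw [hv1, hW1] at h1
  rw [hv2, hW2] at h2
  rw [hUV] at hpar
  -- combine : 4 nZ nY nZ² ≤ 4 δ nY² nZ²
  have key : nZ * nY * nZ ^ 2 ≤ δ * (nY ^ 2 * nZ ^ 2) := by nlinarith [h1, h2, hpar]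
  nlinarith [key, mul_pos hnYpos (mul_pos hnZpos hnZpos), mul_pos hnYpos hnZpos]
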